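/- arXiv:2212.05579 — 5 statements merged into one kernel-verified Lean document; each statement's English description precedes it below -/
import Mathlib

section
/- Let A be a commutative ring which is a ℚ-algebra, I ⊆ A an ideal such that A is I-adically separated and complete, and D : A → A a ℚ-linear derivation with D(A) ⊆ I². For s ∈ ℚ let φ_s denote the unique ring automorphism of A with φ_s(a) − Σ_{j=0}^{k} (s^j/j!)·D^j(a) ∈ I^{k+1} for all a ∈ A, k ∈ ℕ (the exponential of sD). Then for all s, t ∈ ℚ one has φ_s ∘ φ_t = φ_{s+t}, and φ_0 = id_A (the one-parameter group law e^{sD}e^{tD} = e^{(s+t)D} of Section 1.5). -/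
open Finset

section ExpAux
variable {A : Type*} [CommRing A] [Algebra ℚ A] (I : Ideal A)

lemma exp_aux_smul_mem {n : ℕ} (q : ℚ) {x : A} (hx : x ∈ I ^ n) : q • x ∈ I ^ n := by
  rw [Algebra.smul_def]
  exact Ideal.mul_mem_left _ _ hx

variable (D : A →ₗ[ℚ] A)

lemma exp_aux_D_mem (hD : ∀ a b : A, D (a * b) = D a * b + a * D b)
    (hDI : ∀ a : A, D a ∈ I ^ 2) {n : ℕ} {x : A} (hx : x ∈ I ^ n) :
    D x ∈ I ^ (n + 1) := by
  induction n generalizing x with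
  | zero => exact Ideal.pow_le_pow_right (by norm_num) (hDI x)
  | succ n ih =>
    rw [pow_succ'] at hx
    refine Submodule.mul_induction_on hx (fun m hm y hy => ?_) (fun x y hx hy => ?_)
    · rw [hD]
      refine add_mem ?_ ?_
      · have : D m * y ∈ I ^ 2 * I ^ n := Ideal.mul_mem_mul (hDI m) hy
        rw [← pow_add] at this
        exact (Ideal.pow_le_pow_right (by omega)) this
      · have : m * D y ∈ I ^ 1 * I ^ (n + 1) := Ideal.mul_mem_mul (by simpa using hm) (ih hy)
        rw [← pow_add] at this
        exact (Ideal.pow_le_pow_right (by omega)) this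
    · simpa [map_add] using add_mem hx hy

lemma exp_aux_iter_mem (hD : ∀ a b : A, D (a * b) = D a * b + a * D b)
    (hDI : ∀ a : A, D a ∈ I ^ 2) (m : ℕ) (a : A) (hm : 1 ≤ m) :
    (⇑D)^[m] a ∈ I ^ m := by
  clear hm
  induction m with
  | zero => simp
  | succ m ih =>
    rw [Function.iterate_succ_apply']
    cases m with
    | zero =>
      have : I ^ 2 ≤ I ^ 1 := Ideal.pow_le_pow_right (by norm_num)
      simpa using this (hDI a)
    | succ m => exact exp_aux_D_mem I D hD hDI ih

lemma exp_aux_iter_pres (hD : ∀ a b : A, D (a * b) = D a * b + a * D b)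
    (hDI : ∀ a : A, D a ∈ I ^ 2) (j n : ℕ) {x : A} (hx : x ∈ I ^ n) :
    (⇑D)^[j] x ∈ I ^ n := by
  induction j with
  | zero => simpa using hx
  | succ j ih =>
    rw [Function.iterate_succ_apply']
    exact Ideal.pow_le_pow_right (Nat.le_succ n) (exp_aux_D_mem I D hD hDI ih)

lemma exp_aux_phi_pres (hD : ∀ a b : A, D (a * b) = D a * b + a * D b)
    (hDI : ∀ a : A, D a ∈ I ^ 2) (s : ℚ) (φ : A ≃+* A)
    (hφ : ∀ (a : A) (k : ℕ),
      φ a - ∑ j ∈ Finset.range (k + 1), (s ^ j / (j.factorial : ℚ)) • ((⇑D)^[j] a)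
        ∈ I ^ (k + 1))
    (n : ℕ) {x : A} (hx : x ∈ I ^ n) : φ x ∈ I ^ n := by
  cases n with
  | zero => simpa using Submodule.mem_top
  | succ k =>
    have h1 := hφ x k
    have h2 : ∑ j ∈ Finset.range (k + 1), (s ^ j / (j.factorial : ℚ)) • ((⇑D)^[j] x)
        ∈ I ^ (k + 1) :=
      Submodule.sum_mem _ fun j _ =>
        exp_aux_smul_mem I _ (exp_aux_iter_pres I D hD hDI j _ hx)
    simpa using add_mem h1 h2

lemma exp_aux_binom (s t : ℚ) (m : ℕ) :
    (s + t) ^ m / (m.factorial : ℚ) =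
      ∑ i ∈ Finset.range (m + 1),
        s ^ i * t ^ (m - i) / ((i.factorial : ℚ) * ((m - i).factorial : ℚ)) := by
  rw [add_pow, Finset.sum_div]
  refine Finset.sum_congr rfl fun i hi => ?_
  have hi' : i ≤ m := Nat.lt_succ_iff.mp (Finset.mem_range.mp hi)
  rw [Nat.cast_choose ℚ hi']
  have h1 : ((i.factorial : ℚ)) ≠ 0 := Nat.cast_ne_zero.mpr i.factorial_ne_zero
  have h2 : (((m - i).factorial : ℚ)) ≠ 0 := Nat.cast_ne_zero.mpr (m - i).factorial_ne_zero
  have h3 : ((m.factorial : ℚ)) ≠ 0 := Nat.cast_ne_zero.mpr m.factorial_ne_zero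
  field_simp

lemma exp_aux_key (hD : ∀ a b : A, D (a * b) = D a * b + a * D b)
    (hDI : ∀ a : A, D a ∈ I ^ 2) (s t : ℚ) (φs φt : A ≃+* A)
    (hs : ∀ (a : A) (k : ℕ),
      φs a - ∑ j ∈ Finset.range (k + 1), (s ^ j / (j.factorial : ℚ)) • ((⇑D)^[j] a)
        ∈ I ^ (k + 1))
    (ht : ∀ (a : A) (k : ℕ),
      φt a - ∑ j ∈ Finset.range (k + 1), (t ^ j / (j.factorial : ℚ)) • ((⇑D)^[j] a)
        ∈ I ^ (k + 1))
    (a : A) (k : ℕ) :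
    φs (φt a) - ∑ j ∈ Finset.range (k + 1),
        ((s + t) ^ j / (j.factorial : ℚ)) • ((⇑D)^[j] a) ∈ I ^ (k + 1) := by
  classical
  set c : ℕ × ℕ → A := fun p =>
    ((s ^ p.1 * t ^ p.2) / ((p.1.factorial : ℚ) * (p.2.factorial : ℚ))) • ((⇑D)^[p.1 + p.2] a)
    with hc
  set P : Finset (ℕ × ℕ) := Finset.range (k+1) ×ˢ Finset.range (k+1) with hP
  set G : A := ∑ j ∈ Finset.range (k+1), ((s + t) ^ j / (j.factorial : ℚ)) • ((⇑D)^[j] a)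
    with hGdef
  set E1 : A := ∑ j ∈ Finset.range (k+1), (t ^ j / (j.factorial : ℚ)) • ((⇑D)^[j] a) with hE1
  set S2 : A := ∑ j ∈ Finset.range (k+1), (t ^ j / (j.factorial : ℚ)) • φs ((⇑D)^[j] a)
    with hS2
  set T : A := ∑ j ∈ Finset.range (k+1), ∑ i ∈ Finset.range (k+1),
      ((t ^ j / (j.factorial : ℚ)) * (s ^ i / (i.factorial : ℚ))) • ((⇑D)^[i + j] a) with hT
  have h1 : φs (φt a) - S2 ∈ I ^ (k+1) := by
    have h1' : φs (φt a) - φs E1 ∈ I ^ (k+1) := by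
      rw [← map_sub]
      exact exp_aux_phi_pres I D hD hDI s φs hs _ (ht a k)
    have h2 : φs E1 = S2 := by
      rw [hE1, map_sum, hS2]
      exact Finset.sum_congr rfl fun j _ => map_rat_smul _ _ _
    rwa [h2] at h1'
  have hsj : ∀ j : ℕ, φs ((⇑D)^[j] a)
      - ∑ i ∈ Finset.range (k+1), (s ^ i / (i.factorial : ℚ)) • ((⇑D)^[i + j] a)
      ∈ I ^ (k+1) := by
    intro j
    have := hs ((⇑D)^[j] a) k
    simpa [Function.iterate_add_apply] using this
  have h3 : S2 - T ∈ I ^ (k+1) := by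
    rw [hS2, hT, ← Finset.sum_sub_distrib]
    refine Submodule.sum_mem _ fun j _ => ?_
    have e : (t ^ j / (j.factorial : ℚ)) • φs ((⇑D)^[j] a)
        - ∑ i ∈ Finset.range (k+1),
            ((t ^ j / (j.factorial : ℚ)) * (s ^ i / (i.factorial : ℚ))) • ((⇑D)^[i + j] a)
        = (t ^ j / (j.factorial : ℚ)) • (φs ((⇑D)^[j] a)
            - ∑ i ∈ Finset.range (k+1), (s ^ i / (i.factorial : ℚ)) • ((⇑D)^[i + j] a)) := by
      rw [smul_sub, Finset.smul_sum]
      simp [mul_smul]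
    rw [e]
    exact exp_aux_smul_mem I _ (hsj j)
  have hTP : T = ∑ p ∈ P, c p := by
    rw [hP, Finset.sum_product, hT, Finset.sum_comm]
    refine Finset.sum_congr rfl fun j _ => Finset.sum_congr rfl fun i _ => ?_
    rw [hc]
    congr 1
    ring
  have hsplit := Finset.sum_filter_add_sum_filter_not P (fun p => p.1 + p.2 ≤ k) c
  have hbig : ∑ p ∈ P.filter (fun p => ¬ p.1 + p.2 ≤ k), c p ∈ I ^ (k+1) := by
    refine Submodule.sum_mem _ fun p hp => ?_
    simp only [Finset.mem_filter, hP, Finset.mem_product, Finset.mem_range] at hp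
    refine exp_aux_smul_mem I _ ?_
    have h1 : (⇑D)^[p.1 + p.2] a ∈ I ^ (p.1 + p.2) :=
      exp_aux_iter_mem I D hD hDI _ a (by omega)
    exact Ideal.pow_le_pow_right (by omega) h1
  have heq : ∑ p ∈ P.filter (fun p => p.1 + p.2 ≤ k), c p = G := by
    have hset : P.filter (fun p => p.1 + p.2 ≤ k)
        = (Finset.range (k+1)).biUnion (fun m => Finset.HasAntidiagonal.antidiagonal m) := by
      ext p
      simp only [Finset.mem_filter, hP, Finset.mem_product, Finset.mem_range,
        Finset.mem_biUnion, Finset.HasAntidiagonal.mem_antidiagonal]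
      exact ⟨fun h => ⟨p.1 + p.2, by omega, rfl⟩, fun ⟨m, hm, h⟩ => by omega⟩
    have hdisj : (↑(Finset.range (k+1)) : Set ℕ).PairwiseDisjoint
        (fun m => (Finset.HasAntidiagonal.antidiagonal m : Finset (ℕ × ℕ))) := by
      intro x _ y _ hxy
      simp only [Function.onFun, Finset.disjoint_left, Finset.HasAntidiagonal.mem_antidiagonal]
      exact fun p h1 h2 => hxy (h1.symm.trans h2)
    rw [hset, Finset.sum_biUnion hdisj, hGdef]
    refine Finset.sum_congr rfl fun m _ => ?_
    rw [Finset.Nat.sum_antidiagonal_eq_sum_range_succ_mk]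
    have e1 : ∀ i ∈ Finset.range (m+1), c (i, m - i)
        = (s ^ i * t ^ (m - i) / ((i.factorial : ℚ) * ((m - i).factorial : ℚ)))
            • ((⇑D)^[m] a) := by
      intro i hi
      rw [hc]
      simp only
      rw [Nat.add_sub_cancel' (Nat.lt_succ_iff.mp (Finset.mem_range.mp hi))]
    rw [Finset.sum_congr rfl e1, ← Finset.sum_smul, ← exp_aux_binom]
  have hTG : T - G ∈ I ^ (k+1) := by
    have e : T - G = ∑ p ∈ P.filter (fun p => ¬ p.1 + p.2 ≤ k), c p := by
      rw [hTP, ← hsplit, heq]; ring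
    rw [e]; exact hbig
  have := add_mem (add_mem h1 h3) hTG
  simpa using this

end ExpAux

/-- **One-parameter group law for exponentials of a derivation** (Section 1.5:
`e^{sD} e^{tD} = e^{(s+t)D}` and `e^{0D} = id`). Let `A` be a commutative ring which is a
`ℚ`-algebra, `I ⊆ A` an ideal with `A` `I`-adically separated and complete, and
`D : A → A` a `ℚ`-linear derivation with `D(A) ⊆ I²`. If `φs`, `φt`, `φst` are ring
automorphisms of `A` satisfying the defining congruences of `e^{sD}`, `e^{tD}` and
`e^{(s+t)D}` respectively, then `φs ∘ φt = φst`; and any automorphism satisfying the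
defining congruence of `e^{0·D}` is the identity. -/
theorem exp_of_derivation_one_parameter_group
    (A : Type*) [CommRing A] [Algebra ℚ A] (I : Ideal A)
    (hsep : ∀ x : A, (∀ k : ℕ, x ∈ I ^ k) → x = 0)
    (hcomp : ∀ a : ℕ → A, (∀ k : ℕ, a (k + 1) - a k ∈ I ^ k) →
      ∃ b : A, ∀ k : ℕ, b - a k ∈ I ^ k)
    (D : A →ₗ[ℚ] A)
    (hD : ∀ a b : A, D (a * b) = D a * b + a * D b)
    (hDI : ∀ a : A, D a ∈ I ^ 2) :
    (∀ (s t : ℚ) (φs φt φst : A ≃+* A),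
      (∀ (a : A) (k : ℕ),
        φs a - ∑ j ∈ Finset.range (k + 1), (s ^ j / (j.factorial : ℚ)) • ((⇑D)^[j] a)
          ∈ I ^ (k + 1)) →
      (∀ (a : A) (k : ℕ),
        φt a - ∑ j ∈ Finset.range (k + 1), (t ^ j / (j.factorial : ℚ)) • ((⇑D)^[j] a)
          ∈ I ^ (k + 1)) →
      (∀ (a : A) (k : ℕ),
        φst a - ∑ j ∈ Finset.range (k + 1),
            ((s + t) ^ j / (j.factorial : ℚ)) • ((⇑D)^[j] a) ∈ I ^ (k + 1)) →
      ∀ a : A, φs (φt a) = φst a) ∧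
    (∀ φ0 : A ≃+* A,
      (∀ (a : A) (k : ℕ),
        φ0 a - ∑ j ∈ Finset.range (k + 1),
            ((0 : ℚ) ^ j / (j.factorial : ℚ)) • ((⇑D)^[j] a) ∈ I ^ (k + 1)) →
      φ0 = RingEquiv.refl A) := by
  constructor
  · intro s t φs φt φst hs ht hst a
    have key : ∀ k : ℕ, φs (φt a) - φst a ∈ I ^ k := by
      intro k
      cases k with
      | zero => simpa using Submodule.mem_top
      | succ m =>
        have h1 := exp_aux_key I D hD hDI s t φs φt hs ht a m
        have h2 := hst a m
        simpa using sub_mem h1 h2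
    exact sub_eq_zero.mp (hsep _ key)
  · intro φ0 h0
    refine RingEquiv.ext fun a => ?_
    have key : ∀ k : ℕ, φ0 a - a ∈ I ^ k := by
      intro k
      cases k with
      | zero => simpa using Submodule.mem_top
      | succ m =>
        have h1 := h0 a m
        have hsum : ∑ j ∈ Finset.range (m + 1),
            ((0 : ℚ) ^ j / (j.factorial : ℚ)) • ((⇑D)^[j] a) = a := by
          rw [Finset.sum_eq_single 0]
          · simp
          · intro j _ hj
            simp [zero_pow hj]
          · simp
        rwa [hsum] at h1
    simpa using sub_eq_zero.mp (hsep _ key)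
end

section
/- Let A be a ℤ-graded commutative R-algebra and Q : A → A a graded derivation of degree +1. Let I₋ be the ideal of A generated by all homogeneous elements of negative degree. Then the ideal of A generated by I₋ together with Q(I₋) equals the ideal of A generated by I₋ together with Q(A_{−1}); in other words, A·Q[I₋] + I₋ = A·Q[A_{−1}] + I₋. (This is the splitting-free form of Lemma 2.10: 𝒪·Q[𝓘₋] + 𝓘₋ = ⟨κ⟩·𝒪 + 𝓘₋, where the curvature ideal is generated by Q applied to the degree −1 part.) -/
/-- **Lemma 2.10 (splitting-free form).** Let `A` be a `ℤ`-graded commutative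
`R`-algebra and `Q` a graded derivation of degree `+1`. Let `I₋` be the ideal generated
by all homogeneous elements of negative degree. Then the ideal generated by `I₋`
together with `Q(I₋)` equals the ideal generated by `I₋` together with `Q(A₋₁)`:
`A·Q[I₋] + I₋ = A·Q[A₋₁] + I₋`. -/
theorem ideal_QIminus_eq_ideal_QAminusOne
    (R A : Type*) [CommRing R] [CommRing A] [Algebra R A]
    (𝒜 : ℤ → Submodule R A) [GradedAlgebra 𝒜]
    (Q : A →ₗ[R] A)
    (hQdeg : ∀ (i : ℤ), ∀ a ∈ 𝒜 i, Q a ∈ 𝒜 (i + 1))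
    (hQleib : ∀ (i : ℤ), ∀ a ∈ 𝒜 i, ∀ b : A,
      Q (a * b) = Q a * b + (Int.negOnePow i : ℤ) • (a * Q b))
    (Iminus : Ideal A)
    (hIminus : Iminus = Ideal.span {a : A | ∃ i : ℤ, i < 0 ∧ a ∈ 𝒜 i}) :
    Ideal.span (⇑Q '' (Iminus : Set A)) ⊔ Iminus
      = Ideal.span (⇑Q '' ((𝒜 (-1) : Submodule R A) : Set A)) ⊔ Iminus := by
  set RHS : Ideal A :=
    Ideal.span (⇑Q '' ((𝒜 (-1) : Submodule R A) : Set A)) ⊔ Iminus with hRHS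
  have hIle : Iminus ≤ RHS := le_sup_right
  apply le_antisymm
  · refine sup_le ?_ le_sup_right
    rw [Ideal.span_le]
    rintro _ ⟨y, hy, rfl⟩
    -- show Q y ∈ RHS for every y ∈ Iminus
    rw [hIminus] at hy
    refine Submodule.span_induction
      (p := fun y _ => Q y ∈ RHS) ?_ ?_ ?_ ?_ hy
    · rintro g ⟨i, hi, hg⟩
      rcases lt_or_eq_of_le (by omega : i + 1 ≤ 0) with h | h
      · exact hIle (by
          rw [hIminus]
          exact Ideal.subset_span ⟨i + 1, h, hQdeg i g hg⟩)
      · have hi1 : i = -1 := by omega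
        subst hi1
        exact Ideal.mem_sup_left (Ideal.subset_span ⟨g, hg, rfl⟩)
    · simp
    · intro x y _ _ hx hy
      rw [map_add]; exact RHS.add_mem hx hy
    · intro a y hy' hQy
      have hyI : y ∈ Iminus := by rw [hIminus]; exact hy'
      rw [smul_eq_mul]
      induction a using DirectSum.Decomposition.inductionOn 𝒜 with
      | zero => simp only [mul_zero, zero_mul, map_zero]; exact RHS.zero_mem
      | homogeneous m =>
        obtain ⟨i, hm⟩ : ∃ i, (m : A) ∈ 𝒜 i := ⟨_, m.2⟩
        rw [hQleib i m hm y]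
        refine RHS.add_mem (hIle (Iminus.mul_mem_left _ hyI)) ?_
        rw [zsmul_eq_mul]
        exact RHS.mul_mem_left _ (RHS.mul_mem_left _ hQy)
      | add m m' hm hm' =>
        rw [add_mul, map_add]
        exact RHS.add_mem hm hm'
  · refine sup_le ?_ le_sup_right
    refine le_trans ?_ le_sup_left
    apply Ideal.span_mono
    apply Set.image_mono
    intro x hx
    rw [hIminus]
    exact Ideal.subset_span ⟨-1, by norm_num, hx⟩
end

section
/- Let M be a smooth finite-dimensional real manifold which is Hausdorff and σ-compact, and let E → M be a smooth real vector bundle of finite rank. If κ is a smooth section of E such that κ(m) ≠ 0 for every m ∈ M, then there exists a smooth section α of the dual bundle E* (the bundle whose fiber at m is the space of continuous linear maps E_m → ℝ) such that ⟨κ, α⟩ = 1, i.e. α(m)(κ(m)) = 1 for every m ∈ M. (This is the key step in the proof of Lemma 2.2: a nowhere-vanishing section of a vector bundle can be paired to 1 with a smooth section of the dual bundle.) -/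
open Manifold Bundle

set_option linter.unusedSectionVars false

noncomputable section AuxDualSection

variable
  {EM : Type*} [NormedAddCommGroup EM] [NormedSpace ℝ EM]
  {HM : Type*} [TopologicalSpace HM] {IM : ModelWithCorners ℝ EM HM}
  {M : Type*} [TopologicalSpace M] [ChartedSpace HM M]
  [IsManifold IM (⊤ : ℕ∞) M]
  {F : Type*} [NormedAddCommGroup F] [NormedSpace ℝ F]
  {E : M → Type*} [TopologicalSpace (Bundle.TotalSpace F E)]
  [∀ x, TopologicalSpace (E x)] [∀ x, AddCommGroup (E x)] [∀ x, Module ℝ (E x)]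
  [∀ x, IsTopologicalAddGroup (E x)] [∀ x, ContinuousSMul ℝ (E x)]
  [FiberBundle F E] [VectorBundle ℝ F E] [ContMDiffVectorBundle (⊤ : ℕ∞) F E IM]

lemma aux_inCoordinates_apply (y₀ x : M)
    (ϕ : (E x →SL[RingHom.id ℝ] Bundle.Trivial M ℝ x)) (v : F) :
    ContinuousLinearMap.inCoordinates F E ℝ (Bundle.Trivial M ℝ) y₀ x y₀ x ϕ v
      = ϕ ((trivializationAt F E y₀).symmL ℝ x v) := by
  simp only [ContinuousLinearMap.inCoordinates, ContinuousLinearMap.coe_comp',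
    Function.comp_apply, Trivialization.continuousLinearMapAt_apply]
  rw [Trivialization.coe_linearMapAt_of_mem]
  · rfl
  · show x ∈ (Bundle.Trivial.trivialization M ℝ).baseSet
    exact Set.mem_univ x

lemma aux_contMDiffAt_homSection_iff {n : ℕ∞}
    (α : ∀ x, (E x →SL[RingHom.id ℝ] Bundle.Trivial M ℝ x)) (y₀ : M) :
    ContMDiffAt IM (IM.prod 𝓘(ℝ, F →L[ℝ] ℝ)) n
      (fun x => Bundle.TotalSpace.mk' (F →L[ℝ] ℝ) x (α x)) y₀ ↔
    ContMDiffAt IM 𝓘(ℝ, F →L[ℝ] ℝ) n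
      (fun x => ContinuousLinearMap.inCoordinates F E ℝ (Bundle.Trivial M ℝ) y₀ x y₀ x (α x))
      y₀ := by
  rw [Bundle.contMDiffAt_section]
  exact Iff.rfl

/-- the local dual section attached to a point `x₀` and a functional `ξ` on the model fiber -/
def auxDual (x₀ : M) (ξ : F →L[ℝ] ℝ) :
    ∀ x, (E x →SL[RingHom.id ℝ] Bundle.Trivial M ℝ x) :=
  fun x => ξ.comp ((trivializationAt F E x₀).continuousLinearMapAt ℝ x)

lemma auxDual_apply (x₀ : M) (ξ : F →L[ℝ] ℝ) {x : M}
    (hx : x ∈ (trivializationAt F E x₀).baseSet) (w : E x) :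
    auxDual x₀ ξ x w = ξ ((trivializationAt F E x₀ ⟨x, w⟩).2) := by
  simp only [auxDual, ContinuousLinearMap.coe_comp', Function.comp_apply,
    Trivialization.continuousLinearMapAt_apply]
  rw [(trivializationAt F E x₀).coe_linearMapAt_of_mem hx]

lemma aux_local_smooth (x₀ : M) (ξ : F →L[ℝ] ℝ) {y₀ : M}
    (hy₀ : y₀ ∈ (trivializationAt F E x₀).baseSet) :
    ContMDiffAt IM 𝓘(ℝ, F →L[ℝ] ℝ) (⊤ : ℕ∞)
      (fun x => ContinuousLinearMap.inCoordinates F E ℝ (Bundle.Trivial M ℝ) y₀ x y₀ x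
        (auxDual x₀ ξ x)) y₀ := by
  set e := trivializationAt F E x₀ with he
  set e' := trivializationAt F E y₀ with he'
  have hy₀' : y₀ ∈ e'.baseSet := FiberBundle.mem_baseSet_trivializationAt' y₀
  have hmem : e'.baseSet ∩ e.baseSet ∈ nhds y₀ :=
    (e'.open_baseSet.inter e.open_baseSet).mem_nhds ⟨hy₀', hy₀⟩
  have hsmooth : ContMDiffAt IM 𝓘(ℝ, F →L[ℝ] ℝ) (⊤ : ℕ∞)
      (fun x => ξ.comp (e'.coordChangeL ℝ e x : F →L[ℝ] F)) y₀ :=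
    contMDiffAt_const.clm_comp (contMDiffAt_coordChangeL hy₀' hy₀)
  refine hsmooth.congr_of_eventuallyEq ?_
  filter_upwards [hmem] with x hx
  ext v
  rw [aux_inCoordinates_apply]
  rw [auxDual_apply x₀ ξ hx.2]
  simp only [ContinuousLinearMap.coe_comp', Function.comp_apply,
    ContinuousLinearEquiv.coe_coe, Trivialization.symmL_apply]
  congr 1
  rw [Trivialization.coordChangeL_apply e' e hx]
  rw [Trivialization.symmL_apply]
  exact hx.1

end AuxDualSection

/-- **Key step of the proof of Lemma 2.2.** Let `M` be a smooth finite-dimensional real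
manifold, Hausdorff and σ-compact, and `E → M` a smooth real vector bundle of finite
rank (model fiber `F`). If `κ` is a smooth section of `E` which is nowhere zero, then
there is a smooth section `α` of the dual bundle `E*` (the bundle of continuous linear
maps `E_m → ℝ`) with `⟨κ, α⟩ = 1`, i.e. `α m (κ m) = 1` for all `m`. -/
theorem exists_dual_section_pairing_one_of_nowhere_vanishing
    {EM : Type*} [NormedAddCommGroup EM] [NormedSpace ℝ EM] [FiniteDimensional ℝ EM]
    {HM : Type*} [TopologicalSpace HM] (IM : ModelWithCorners ℝ EM HM)
    (M : Type*) [TopologicalSpace M] [ChartedSpace HM M]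
    [IsManifold IM (⊤ : ℕ∞) M] [T2Space M] [SigmaCompactSpace M]
    (F : Type*) [NormedAddCommGroup F] [NormedSpace ℝ F] [FiniteDimensional ℝ F]
    (E : M → Type*) [TopologicalSpace (Bundle.TotalSpace F E)]
    [∀ x, TopologicalSpace (E x)] [∀ x, AddCommGroup (E x)] [∀ x, Module ℝ (E x)]
    [∀ x, IsTopologicalAddGroup (E x)] [∀ x, ContinuousSMul ℝ (E x)]
    [FiberBundle F E] [VectorBundle ℝ F E] [ContMDiffVectorBundle (⊤ : ℕ∞) F E IM]
    (κ : ContMDiffSection IM F (⊤ : ℕ∞) E)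
    (hκ : ∀ m : M, κ m ≠ 0) :
    ∃ α : ContMDiffSection IM (F →L[ℝ] ℝ) (⊤ : ℕ∞)
        (fun x ↦ E x →SL[RingHom.id ℝ] Bundle.Trivial M ℝ x),
      ∀ m : M, α m (κ m) = 1 := by
  classical
  -- Step 1: local dual sections
  have key : ∀ x₀ : M, ∃ (W : Set M)
      (α : ∀ x, (E x →SL[RingHom.id ℝ] Bundle.Trivial M ℝ x)),
      IsOpen W ∧ x₀ ∈ W ∧
      (∀ y₀ ∈ W, ContMDiffAt IM 𝓘(ℝ, F →L[ℝ] ℝ) (⊤ : ℕ∞)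
        (fun x => ContinuousLinearMap.inCoordinates F E ℝ (Bundle.Trivial M ℝ) y₀ x y₀ x (α x))
          y₀) ∧
      (∀ x ∈ W, 0 < α x (κ x)) := by
    intro x₀
    set e := trivializationAt F E x₀ with he
    have hx₀ : x₀ ∈ e.baseSet := FiberBundle.mem_baseSet_trivializationAt' x₀
    have hw0 : (e ⟨x₀, κ x₀⟩).2 ≠ 0 := by
      intro h0
      apply hκ x₀
      have h1 : (e.continuousLinearEquivAt ℝ x₀ hx₀) (κ x₀) = 0 := by
        rw [Trivialization.continuousLinearEquivAt_apply]; exact h0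
      exact (e.continuousLinearEquivAt ℝ x₀ hx₀).map_eq_zero_iff.mp h1
    obtain ⟨ξ, hξ⟩ := SeparatingDual.exists_eq_one (R := ℝ) hw0
    have hκcont : Continuous fun x => Bundle.TotalSpace.mk' F x (κ x) :=
      κ.contMDiff.continuous
    have hgc : ContinuousOn (fun x => ξ ((e ⟨x, κ x⟩).2)) e.baseSet := by
      apply ξ.continuous.comp_continuousOn
      apply continuous_snd.comp_continuousOn
      exact e.continuousOn.comp hκcont.continuousOn fun x hx => e.mem_source.mpr hx
    refine ⟨e.baseSet ∩ (fun x => ξ ((e ⟨x, κ x⟩).2)) ⁻¹' Set.Ioi 0, auxDual x₀ ξ,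
      hgc.isOpen_inter_preimage e.open_baseSet isOpen_Ioi, ⟨hx₀, ?_⟩, ?_, ?_⟩
    · show (0:ℝ) < ξ ((e ⟨x₀, κ x₀⟩).2)
      rw [hξ]; norm_num
    · intro y₀ hy₀
      exact aux_local_smooth x₀ ξ hy₀.1
    · intro x hx
      rw [auxDual_apply x₀ ξ hx.1]
      exact hx.2
  choose W αl hWopen hWmem hαsmooth hαpos using key
  obtain ⟨f, hf⟩ := SmoothPartitionOfUnity.exists_isSubordinate (I := IM) isClosed_univ W hWopen
    (fun x _ => Set.mem_iUnion.2 ⟨x, hWmem x⟩)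
  -- the glued section
  set β : ∀ x, (E x →SL[RingHom.id ℝ] Bundle.Trivial M ℝ x) :=
    fun x => ∑ᶠ i, f i x • αl i x with hβ
  have hptfin : ∀ x : M, {i : M | f i x ≠ 0}.Finite := fun x =>
    f.locallyFinite.point_finite x
  -- smoothness of β in coordinates
  have hβsm : ∀ y₀ : M, ContMDiffAt IM 𝓘(ℝ, F →L[ℝ] ℝ) (⊤ : ℕ∞)
      (fun x => ContinuousLinearMap.inCoordinates F E ℝ (Bundle.Trivial M ℝ) y₀ x y₀ x (β x))
        y₀ := by
    intro y₀
    obtain ⟨t, ht, hTfin⟩ := f.locallyFinite y₀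
    set T := hTfin.toFinset with hT
    have hterm : ∀ i : M, ContMDiffAt IM 𝓘(ℝ, F →L[ℝ] ℝ) (⊤ : ℕ∞)
        (fun x => f i x •
          ContinuousLinearMap.inCoordinates F E ℝ (Bundle.Trivial M ℝ) y₀ x y₀ x (αl i x))
          y₀ := by
      intro i
      by_cases hi : y₀ ∈ tsupport (f i)
      · exact ((f i).contMDiff.contMDiffAt).smul (hαsmooth i y₀ (hf i hi))
      · refine (contMDiffAt_const (c := 0)).congr_of_eventuallyEq ?_
        filter_upwards [(isClosed_tsupport (f i)).isOpen_compl.mem_nhds hi] with x hx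
        rw [image_eq_zero_of_notMem_tsupport hx, zero_smul]
    have hsum : ContMDiffAt IM 𝓘(ℝ, F →L[ℝ] ℝ) (⊤ : ℕ∞)
        (fun x => ∑ i ∈ T, f i x •
          ContinuousLinearMap.inCoordinates F E ℝ (Bundle.Trivial M ℝ) y₀ x y₀ x (αl i x))
          y₀ := contMDiffAt_finset_sum fun i _ => hterm i
    refine hsum.congr_of_eventuallyEq ?_
    filter_upwards [ht] with x hx
    have hsub : Function.support (fun i => f i x • αl i x) ⊆ ↑T := by
      intro i hi
      have hfi : f i x ≠ 0 := by
        intro h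
        apply hi
        simp [h]
      rw [hT, Set.Finite.coe_toFinset]
      exact ⟨x, hfi, hx⟩
    have hβx : β x = ∑ i ∈ T, f i x • αl i x :=
      finsum_eq_sum_of_support_subset _ hsub
    ext v
    rw [aux_inCoordinates_apply, hβx]
    simp only [ContinuousLinearMap.sum_apply, ContinuousLinearMap.smul_apply]
    refine Finset.sum_congr rfl fun i _ => ?_
    rw [aux_inCoordinates_apply]
  -- positivity of the pairing
  have hpos : ∀ x : M, (0:ℝ) < β x (κ x) := by
    intro x
    set T := (hptfin x).toFinset with hT
    have hsub : Function.support (fun i => f i x • αl i x) ⊆ ↑T := by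
      intro i hi
      rw [hT, Set.Finite.coe_toFinset]
      intro h
      apply hi
      simp [h]
    have hβx : β x = ∑ i ∈ T, f i x • αl i x :=
      finsum_eq_sum_of_support_subset _ hsub
    have hval : β x (κ x) = ∑ i ∈ T, f i x * (αl i x (κ x)) := by
      rw [hβx]
      simp only [ContinuousLinearMap.sum_apply, ContinuousLinearMap.smul_apply]
      rfl
    have hTne : T.Nonempty := by
      by_contra hTe
      rw [Finset.not_nonempty_iff_eq_empty] at hTe
      have h1 := f.sum_eq_one (Set.mem_univ x)
      have hsub' : Function.support (fun i => f i x) ⊆ ↑T := by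
        intro i hi
        rw [hT, Set.Finite.coe_toFinset]
        exact hi
      rw [finsum_eq_sum_of_support_subset _ hsub', hTe, Finset.sum_empty] at h1
      exact zero_ne_one h1
    rw [hval]
    refine Finset.sum_pos (fun i hi => ?_) hTne
    have hfi : f i x ≠ 0 := by
      have := (hptfin x).mem_toFinset.1 hi
      exact this
    exact mul_pos ((f.nonneg i x).lt_of_ne (Ne.symm hfi))
      (hαpos i x (hf i (subset_tsupport _ hfi)))
  -- smoothness of the pairing function
  have hh : ∀ y₀ : M, ContMDiffAt IM 𝓘(ℝ) (⊤ : ℕ∞) (fun x => (β x (κ x) : ℝ)) y₀ := by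
    intro y₀
    have hκc : ContMDiffAt IM 𝓘(ℝ, F) (⊤ : ℕ∞)
        (fun x => (trivializationAt F E y₀ ⟨x, κ x⟩).2) y₀ :=
      (Bundle.contMDiffAt_section _).1 (κ.contMDiff y₀)
    refine ((hβsm y₀).clm_apply hκc).congr_of_eventuallyEq ?_
    filter_upwards [(trivializationAt F E y₀).open_baseSet.mem_nhds
      (FiberBundle.mem_baseSet_trivializationAt' y₀)] with x hx
    rw [aux_inCoordinates_apply]
    congr 1
    rw [Trivialization.symmL_apply, Trivialization.symm_apply_apply_mk _ hx]
    exact hx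
  -- final section
  refine ⟨⟨fun x => (β x (κ x) : ℝ)⁻¹ • β x, ?_⟩, ?_⟩
  · intro y₀
    rw [aux_contMDiffAt_homSection_iff]
    refine (((hh y₀).inv₀ (ne_of_gt (hpos y₀))).smul (hβsm y₀)).congr_of_eventuallyEq ?_
    apply Filter.Eventually.of_forall
    intro x
    ext v
    rw [aux_inCoordinates_apply, ContinuousLinearMap.smul_apply,
      Pi.smul_apply', ContinuousLinearMap.smul_apply, aux_inCoordinates_apply]
  · intro m
    show (β m (κ m) : ℝ)⁻¹ • β m (κ m) = 1
    exact inv_mul_cancel₀ (ne_of_gt (hpos m))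
end

section
/- Let A = ℝ[x,y]/(xy) be the quotient of the real polynomial ring in two variables by the ideal generated by xy. For every ℝ-linear derivation d : A → A there exist unique one-variable polynomials f, g ∈ ℝ[t] such that d is induced by the derivation x·f(x)·∂/∂x + y·g(y)·∂/∂y of ℝ[x,y]; i.e. for every h ∈ ℝ[x,y], d([h]) = [ x·f(x)·∂h/∂x + y·g(y)·∂h/∂y ], where [·] denotes the class in A. In particular the assignment (f,g) ↦ d is an ℝ-linear bijection from ℝ[t] × ℝ[t] onto the space of ℝ-derivations of A. (This realizes the claim of Example 4.2 that H⁰(𝔛(𝒪₋), ad_δ) ≅ { x f(x) ∂/∂x + y g(y) ∂/∂y } for the Koszul–Tate resolution δ = xy ∂/∂ξ, combined with the isomorphism H⁰ ≅ Der(C^∞(M₀)/I) of Proposition 3.11, in the affine setting.) -/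
open MvPolynomial

set_option maxHeartbeats 1000000
set_option synthInstance.maxHeartbeats 400000

noncomputable def phi (j : Fin 2) : MvPolynomial (Fin 2) ℝ →ₐ[ℝ] Polynomial ℝ :=
  aeval (fun i => if i = j then Polynomial.X else 0)

lemma phi_X_self (j : Fin 2) : phi j (X j) = Polynomial.X := by simp [phi]

lemma phi_X_ne {i j : Fin 2} (h : i ≠ j) : phi j (X i) = 0 := by simp [phi, h]

lemma phi_aeval (j : Fin 2) (p : Polynomial ℝ) :
    phi j (Polynomial.aeval (X j) p) = p := by
  rw [← Polynomial.aeval_algHom_apply, phi_X_self]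
  exact congrFun (congrArg _ Polynomial.aeval_X_left) p

lemma phi_mem {j : Fin 2} {w : MvPolynomial (Fin 2) ℝ}
    (hw : w ∈ Ideal.span {(X 0 * X 1 : MvPolynomial (Fin 2) ℝ)}) : phi j w = 0 := by
  obtain ⟨s, rfl⟩ := Ideal.mem_span_singleton.mp hw
  fin_cases j <;> simp [phi]

lemma uniq_aux (p q : Polynomial ℝ)
    (h : Polynomial.aeval (X 0 : MvPolynomial (Fin 2) ℝ) p
        + X 1 * Polynomial.aeval (X 1 : MvPolynomial (Fin 2) ℝ) q
        ∈ Ideal.span {(X 0 * X 1 : MvPolynomial (Fin 2) ℝ)}) : p = 0 ∧ q = 0 := by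
  have h0 := phi_mem (j := 0) h
  rw [map_add, map_mul, phi_X_ne (by decide), zero_mul, add_zero, phi_aeval] at h0
  subst h0
  have h1 := phi_mem (j := 1) h
  simp only [map_add, map_mul, map_zero, zero_add, phi_X_self, phi_aeval] at h1
  exact ⟨rfl, by simpa [Polynomial.X_ne_zero] using mul_eq_zero.mp h1⟩

lemma decomp (h : MvPolynomial (Fin 2) ℝ) :
    ∃ (p q : Polynomial ℝ) (r : MvPolynomial (Fin 2) ℝ), h = Polynomial.aeval (X 0 : MvPolynomial (Fin 2) ℝ) p
        + X 1 * Polynomial.aeval (X 1 : MvPolynomial (Fin 2) ℝ) q + X 0 * X 1 * r := by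
  induction h using MvPolynomial.induction_on with
  | C a => exact ⟨Polynomial.C a, 0, 0, by simp only [Polynomial.aeval_C, map_zero, mul_zero, add_zero, algebraMap_eq]⟩
  | add f g hf hg =>
      obtain ⟨p1, q1, r1, rfl⟩ := hf
      obtain ⟨p2, q2, r2, rfl⟩ := hg
      exact ⟨p1 + p2, q1 + q2, r1 + r2, by rw [map_add, map_add]; ring⟩
  | mul_X f i hf =>
      obtain ⟨p, q, r, rfl⟩ := hf
      fin_cases i
      · refine ⟨Polynomial.X * p, 0, Polynomial.aeval (X 1) q + X 0 * r, ?_⟩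
        simp only [map_mul, map_zero, Polynomial.aeval_X, Fin.zero_eta, Fin.mk_one]
        ring
      · refine ⟨0, Polynomial.C (p.coeff 0) + Polynomial.X * q,
          Polynomial.aeval (X 0) p.divX + X 1 * r, ?_⟩
        conv_lhs => rw [← Polynomial.X_mul_divX_add p]
        simp only [map_add, map_mul, map_zero, Polynomial.aeval_X, Polynomial.aeval_C,
          algebraMap_eq, Fin.zero_eta, Fin.mk_one]
        ring

/-- **Example 4.2 (affine form): derivations of `ℝ[x,y]/(xy)`.** Every `ℝ`-linear
derivation `d` of `A = ℝ[x,y]/(xy)` is induced, for unique one-variable polynomials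
`f, g ∈ ℝ[t]`, by the derivation `x·f(x)·∂/∂x + y·g(y)·∂/∂y` of `ℝ[x,y]`:
for all `h ∈ ℝ[x,y]`, `d [h] = [x·f(x)·∂h/∂x + y·g(y)·∂h/∂y]`. -/
theorem derivations_of_xy_quotient
    (d : (MvPolynomial (Fin 2) ℝ ⧸
          Ideal.span {(X 0 * X 1 : MvPolynomial (Fin 2) ℝ)}) →ₗ[ℝ]
         (MvPolynomial (Fin 2) ℝ ⧸
          Ideal.span {(X 0 * X 1 : MvPolynomial (Fin 2) ℝ)}))
    (hd : ∀ a b, d (a * b) = d a * b + a * d b) :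
    ∃! fg : Polynomial ℝ × Polynomial ℝ,
      ∀ h : MvPolynomial (Fin 2) ℝ,
        d (Ideal.Quotient.mk _ h) =
          Ideal.Quotient.mk _
            (X 0 * Polynomial.aeval (X 0 : MvPolynomial (Fin 2) ℝ) fg.1 * pderiv 0 h
              + X 1 * Polynomial.aeval (X 1 : MvPolynomial (Fin 2) ℝ) fg.2 * pderiv 1 h) := by
  have hxy0 : (Ideal.Quotient.mk (Ideal.span {(X 0 * X 1 : MvPolynomial (Fin 2) ℝ)}))
      (X 0 * X 1) = 0 := Ideal.Quotient.eq_zero_iff_mem.mpr (Ideal.subset_span rfl)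
  have hd1 : d 1 = 0 := by
    have h11 := hd 1 1
    rw [mul_one, mul_one, one_mul] at h11
    exact right_eq_add.mp h11
  obtain ⟨P, hP⟩ := Ideal.Quotient.mk_surjective (d (Ideal.Quotient.mk _ (X 0)))
  obtain ⟨Q, hQ⟩ := Ideal.Quotient.mk_surjective (d (Ideal.Quotient.mk _ (X 1)))
  obtain ⟨p1, p2, r1, hPd⟩ := decomp P
  obtain ⟨q1, q2, r2, hQd⟩ := decomp Q
  set f : Polynomial ℝ := p1.divX with hf
  set c : ℝ := p1.coeff 0 with hcdef
  have hp1 : p1 = Polynomial.X * f + Polynomial.C c := (Polynomial.X_mul_divX_add p1).symm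
  have hcon : (Ideal.Quotient.mk (Ideal.span {(X 0 * X 1 : MvPolynomial (Fin 2) ℝ)}))
      (P * X 1 + X 0 * Q) = 0 := by
    rw [map_add, map_mul, map_mul, hP, hQ, ← hd, ← map_mul, hxy0, map_zero]
  have hmem : P * X 1 + X 0 * Q ∈ Ideal.span {(X 0 * X 1 : MvPolynomial (Fin 2) ℝ)} :=
    Ideal.Quotient.eq_zero_iff_mem.mp hcon
  have hW : Polynomial.aeval (X 0 : MvPolynomial (Fin 2) ℝ) (Polynomial.X * q1)
      + X 1 * Polynomial.aeval (X 1 : MvPolynomial (Fin 2) ℝ)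
          (Polynomial.C c + Polynomial.X * p2)
      ∈ Ideal.span {(X 0 * X 1 : MvPolynomial (Fin 2) ℝ)} := by
    have heq : Polynomial.aeval (X 0 : MvPolynomial (Fin 2) ℝ) (Polynomial.X * q1)
        + X 1 * Polynomial.aeval (X 1 : MvPolynomial (Fin 2) ℝ)
            (Polynomial.C c + Polynomial.X * p2)
        = (P * X 1 + X 0 * Q)
          - X 0 * X 1 * (Polynomial.aeval (X 0) f + X 1 * r1
              + Polynomial.aeval (X 1) q2 + X 0 * r2) := by
      rw [hPd, hQd, hp1]
      simp only [map_add, map_mul, Polynomial.aeval_X, Polynomial.aeval_C, algebraMap_eq]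
      ring
    rw [heq]
    exact Ideal.sub_mem _ hmem (Ideal.mul_mem_right _ _ (Ideal.subset_span rfl))
  obtain ⟨hq1, hp2⟩ := uniq_aux _ _ hW
  have hq1' : q1 = 0 := by
    rcases mul_eq_zero.mp hq1 with h | h
    · exact absurd h Polynomial.X_ne_zero
    · exact h
  have hc0 : c = 0 := by
    have := congrArg (fun r => Polynomial.coeff r 0) hp2
    simpa using this
  have hp2' : p2 = 0 := by
    rw [hc0, Polynomial.C_0, zero_add] at hp2
    rcases mul_eq_zero.mp hp2 with h | h
    · exact absurd h Polynomial.X_ne_zero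
    · exact h
  have hdX0 : d (Ideal.Quotient.mk _ (X 0)) =
      Ideal.Quotient.mk _ (X 0 * Polynomial.aeval (X 0 : MvPolynomial (Fin 2) ℝ) f) := by
    rw [← hP, hPd, hp1, hc0, hp2']
    simp only [Polynomial.C_0, add_zero, mul_zero, map_add, map_mul, map_zero, zero_add,
      hxy0, zero_mul, Polynomial.aeval_X]
  have hdX1 : d (Ideal.Quotient.mk _ (X 1)) =
      Ideal.Quotient.mk _ (X 1 * Polynomial.aeval (X 1 : MvPolynomial (Fin 2) ℝ) q2) := by
    rw [← hQ, hQd, hq1']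
    simp only [map_add, map_mul, map_zero, zero_add, hxy0, zero_mul, add_zero]
  have key : ∀ h : MvPolynomial (Fin 2) ℝ,
      d (Ideal.Quotient.mk _ h) = Ideal.Quotient.mk _
        (X 0 * Polynomial.aeval (X 0 : MvPolynomial (Fin 2) ℝ) f * pderiv 0 h
          + X 1 * Polynomial.aeval (X 1 : MvPolynomial (Fin 2) ℝ) q2 * pderiv 1 h) := by
    intro h
    induction h using MvPolynomial.induction_on with
    | C a =>
        have h1 : (Ideal.Quotient.mk (Ideal.span {(X 0 * X 1 : MvPolynomial (Fin 2) ℝ)}))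
            (C a) = a • 1 := by
          rw [← MvPolynomial.algebraMap_eq, Ideal.Quotient.mk_algebraMap,
            Algebra.algebraMap_eq_smul_one]
        rw [h1, map_smul, hd1, smul_zero, pderiv_C, pderiv_C, mul_zero, mul_zero, add_zero,
          map_zero]
    | add p q ih1 ih2 =>
        rw [map_add, map_add, ih1, ih2, ← map_add]
        congr 1
        simp only [map_add]
        ring
    | mul_X p i ih =>
        fin_cases i
        · simp only [Fin.zero_eta]
          rw [map_mul, hd, ih, hdX0, ← map_mul, ← map_mul, ← map_add]
          congr 1
          simp only [pderiv_mul, pderiv_X_self, pderiv_X_of_ne (show (0 : Fin 2) ≠ 1 by decide)]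
          ring
        · simp only [Fin.mk_one]
          rw [map_mul, hd, ih, hdX1, ← map_mul, ← map_mul, ← map_add]
          congr 1
          simp only [pderiv_mul, pderiv_X_self, pderiv_X_of_ne (show (1 : Fin 2) ≠ 0 by decide)]
          ring
  refine ⟨(f, q2), key, ?_⟩
  rintro ⟨f', g'⟩ hfg'
  have e0 := (hfg' (X 0)).symm.trans (key (X 0))
  have e1 := (hfg' (X 1)).symm.trans (key (X 1))
  rw [pderiv_X_self, pderiv_X_of_ne (show (0 : Fin 2) ≠ 1 by decide), mul_one, mul_one,
    mul_zero, mul_zero, add_zero, add_zero] at e0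
  rw [pderiv_X_self, pderiv_X_of_ne (show (1 : Fin 2) ≠ 0 by decide), mul_one, mul_one,
    mul_zero, mul_zero, zero_add, zero_add] at e1
  have m0 : Polynomial.aeval (X 0 : MvPolynomial (Fin 2) ℝ) (Polynomial.X * (f' - f))
      + X 1 * Polynomial.aeval (X 1 : MvPolynomial (Fin 2) ℝ) (0 : Polynomial ℝ)
      ∈ Ideal.span {(X 0 * X 1 : MvPolynomial (Fin 2) ℝ)} := by
    have hsub := Ideal.Quotient.eq.mp e0
    have : Polynomial.aeval (X 0 : MvPolynomial (Fin 2) ℝ) (Polynomial.X * (f' - f))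
        + X 1 * Polynomial.aeval (X 1 : MvPolynomial (Fin 2) ℝ) (0 : Polynomial ℝ)
        = X 0 * Polynomial.aeval (X 0 : MvPolynomial (Fin 2) ℝ) f'
          - X 0 * Polynomial.aeval (X 0 : MvPolynomial (Fin 2) ℝ) f := by
      simp only [map_sub, map_mul, map_zero, Polynomial.aeval_X]
      ring
    rw [this]
    exact hsub
  have m1 : Polynomial.aeval (X 0 : MvPolynomial (Fin 2) ℝ) (0 : Polynomial ℝ)
      + X 1 * Polynomial.aeval (X 1 : MvPolynomial (Fin 2) ℝ) (g' - q2)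
      ∈ Ideal.span {(X 0 * X 1 : MvPolynomial (Fin 2) ℝ)} := by
    have hsub := Ideal.Quotient.eq.mp e1
    have : Polynomial.aeval (X 0 : MvPolynomial (Fin 2) ℝ) (0 : Polynomial ℝ)
        + X 1 * Polynomial.aeval (X 1 : MvPolynomial (Fin 2) ℝ) (g' - q2)
        = X 1 * Polynomial.aeval (X 1 : MvPolynomial (Fin 2) ℝ) g'
          - X 1 * Polynomial.aeval (X 1 : MvPolynomial (Fin 2) ℝ) q2 := by
      simp only [map_sub, map_mul, map_zero, Polynomial.aeval_X]
      ring
    rw [this]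
    exact hsub
  have hf' : f' = f := by
    have h0 := (uniq_aux _ _ m0).1
    rcases mul_eq_zero.mp h0 with h | h
    · exact absurd h Polynomial.X_ne_zero
    · exact sub_eq_zero.mp h
  have hg' : g' = q2 := by
    have h1 := (uniq_aux _ _ m1).2
    exact sub_eq_zero.mp h1
  rw [hf', hg']
end

section
/- Let a, b, c ∈ ℝ[x,y] satisfy the cocycle condition y·a + x·b = x·y·c. Then there exist unique one-variable polynomials f, g ∈ ℝ[t] and unique p, q ∈ ℝ[x,y] such that a = x·f(x) + x·y·p, b = y·g(y) + x·y·q, and c = f(x) + g(y) + y·p + x·q. (This is the explicit normal form behind the computation in Example 4.2: every degree-0 ad_δ-cocycle for the Koszul–Tate differential δ = xy ∂/∂ξ on ℝ[x,y][ξ] is, modulo the coboundaries [δ, ξ(p∂/∂x + q∂/∂y)] = xy·p·∂/∂x + xy·q·∂/∂y + (yp+xq)·ξ∂/∂ξ, uniquely of the form x f(x) ∂/∂x + y g(y) ∂/∂y, so that H⁰(𝔛(𝒪₋), ad_δ) ≅ { x f(x) ∂/∂x + y g(y) ∂/∂y | f, g ∈ C^∞(ℝ) } in the polynomial setting.) 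-/
open MvPolynomial

noncomputable section CocycleAux

/-- Substitute `0` for variable `i`. -/
private def ev (i : Fin 2) : MvPolynomial (Fin 2) ℝ →ₐ[ℝ] MvPolynomial (Fin 2) ℝ :=
  aeval (Function.update X i 0)

private lemma ev_X_self (i : Fin 2) : ev i (X i) = 0 := by
  simp [ev]

private lemma ev_X_ne (i j : Fin 2) (h : j ≠ i) : ev i (X j) = X j := by
  simp [ev, Function.update_of_ne h]

/-- The difference between a polynomial and its evaluation at `xᵢ = 0` is divisible by `Xᵢ`. -/
private lemma X_dvd_sub_ev (i : Fin 2) (B : MvPolynomial (Fin 2) ℝ) :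
    X i ∣ B - ev i B := by
  induction B using MvPolynomial.induction_on with
  | C r => simp [ev]
  | add p q hp hq =>
    have : p + q - ev i (p + q) = (p - ev i p) + (q - ev i q) := by
      rw [map_add]; ring
    rw [this]; exact dvd_add hp hq
  | mul_X p j hp =>
    rw [map_mul]
    by_cases hj : j = i
    · subst hj
      rw [ev_X_self]
      simp
    · rw [ev_X_ne i j hj]
      have : p * X j - ev i p * X j = (p - ev i p) * X j := by ring
      rw [this]
      exact Dvd.dvd.mul_right hp _

private lemma ev_aeval (i j : Fin 2) (h : j ≠ i) (f : Polynomial ℝ) :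
    ev i (Polynomial.aeval (X j : MvPolynomial (Fin 2) ℝ) f) =
      Polynomial.aeval (X j : MvPolynomial (Fin 2) ℝ) f := by
  have : (ev i).comp (Polynomial.aeval (X j : MvPolynomial (Fin 2) ℝ)) =
      Polynomial.aeval (X j : MvPolynomial (Fin 2) ℝ) := by
    apply Polynomial.algHom_ext
    simp [ev_X_ne i j h]
  exact congrFun (congrArg DFunLike.coe this) f

private lemma aevalX_inj (i : Fin 2) :
    Function.Injective (Polynomial.aeval (R := ℝ) (X i : MvPolynomial (Fin 2) ℝ)) := by
  intro f g h
  have key : (MvPolynomial.aeval (R := ℝ) (fun _ : Fin 2 => (Polynomial.X : Polynomial ℝ))).comp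
      (Polynomial.aeval (X i : MvPolynomial (Fin 2) ℝ)) = AlgHom.id ℝ (Polynomial ℝ) := by
    apply Polynomial.algHom_ext
    simp
  have hf := congrFun (congrArg DFunLike.coe key) f
  have hg := congrFun (congrArg DFunLike.coe key) g
  simp only [AlgHom.coe_comp, Function.comp_apply, AlgHom.id_apply] at hf hg
  rw [← hf, ← hg, h]

end CocycleAux

/-- **Normal form of degree-0 cocycles in Example 4.2.** If `a, b, c ∈ ℝ[x,y]` satisfy
the cocycle condition `y·a + x·b = x·y·c` (i.e. the vector field
`a ∂/∂x + b ∂/∂y + c ξ∂/∂ξ` commutes with `δ = xy ∂/∂ξ`), then there are unique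
one-variable polynomials `f, g ∈ ℝ[t]` and unique `p, q ∈ ℝ[x,y]` with
`a = x·f(x) + xy·p`, `b = y·g(y) + xy·q` and `c = f(x) + g(y) + y·p + x·q`. -/
theorem cocycle_normal_form_xy
    (a b c : MvPolynomial (Fin 2) ℝ)
    (hcocycle : X 1 * a + X 0 * b = X 0 * X 1 * c) :
    ∃! fgpq : (Polynomial ℝ × Polynomial ℝ) ×
        (MvPolynomial (Fin 2) ℝ × MvPolynomial (Fin 2) ℝ),
      a = X 0 * Polynomial.aeval (X 0 : MvPolynomial (Fin 2) ℝ) fgpq.1.1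
            + X 0 * X 1 * fgpq.2.1 ∧
      b = X 1 * Polynomial.aeval (X 1 : MvPolynomial (Fin 2) ℝ) fgpq.1.2
            + X 0 * X 1 * fgpq.2.2 ∧
      c = Polynomial.aeval (X 0 : MvPolynomial (Fin 2) ℝ) fgpq.1.1
            + Polynomial.aeval (X 1 : MvPolynomial (Fin 2) ℝ) fgpq.1.2
            + X 1 * fgpq.2.1 + X 0 * fgpq.2.2 := by
  have h01 : (0 : Fin 2) ≠ 1 := by decide
  have h10 : (1 : Fin 2) ≠ 0 := by decide
  have hX0 : (X 0 : MvPolynomial (Fin 2) ℝ) ≠ 0 := X_ne_zero 0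
  have hX1 : (X 1 : MvPolynomial (Fin 2) ℝ) ≠ 0 := X_ne_zero 1
  -- Step 1: `X 0 ∣ a`.
  have heva : ev 0 a = 0 := by
    have h := congrArg (ev 0) hcocycle
    simp only [map_add, map_mul, ev_X_self, ev_X_ne 0 1 h10, zero_mul, mul_zero, add_zero,
      zero_mul] at h
    exact (mul_eq_zero.mp h).resolve_left hX1
  have hevb : ev 1 b = 0 := by
    have h := congrArg (ev 1) hcocycle
    simp only [map_add, map_mul, ev_X_self, ev_X_ne 1 0 h01, zero_mul, mul_zero, add_zero,
      zero_add] at h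
    exact (mul_eq_zero.mp h).resolve_left hX0
  obtain ⟨A, hA⟩ : X 0 ∣ a := by
    have := X_dvd_sub_ev 0 a; rwa [heva, sub_zero] at this
  obtain ⟨B, hB⟩ : X 1 ∣ b := by
    have := X_dvd_sub_ev 1 b; rwa [hevb, sub_zero] at this
  -- Step 2: `c = A + B`.
  have hc : c = A + B := by
    have h : X 0 * X 1 * c = X 0 * X 1 * (A + B) := by
      rw [← hcocycle, hA, hB]; ring
    exact mul_left_cancel₀ (mul_ne_zero hX0 hX1) h
  -- Step 3: decompose A and B.
  set f : Polynomial ℝ := aeval ![Polynomial.X, 0] A with hfdef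
  have hf : Polynomial.aeval (X 0 : MvPolynomial (Fin 2) ℝ) f = ev 1 A := by
    have : (Polynomial.aeval (X 0 : MvPolynomial (Fin 2) ℝ)).comp
        (aeval (![Polynomial.X, 0] : Fin 2 → Polynomial ℝ)) = ev 1 := by
      apply MvPolynomial.algHom_ext
      intro i
      fin_cases i <;> simp [ev_X_self, ev_X_ne 1 0 h01]
    exact congrFun (congrArg DFunLike.coe this) A
  set g : Polynomial ℝ := aeval ![0, Polynomial.X] B with hgdef
  have hg : Polynomial.aeval (X 1 : MvPolynomial (Fin 2) ℝ) g = ev 0 B := by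
    have : (Polynomial.aeval (X 1 : MvPolynomial (Fin 2) ℝ)).comp
        (aeval (![0, Polynomial.X] : Fin 2 → Polynomial ℝ)) = ev 0 := by
      apply MvPolynomial.algHom_ext
      intro i
      fin_cases i <;> simp [ev_X_self, ev_X_ne 0 1 h10]
    exact congrFun (congrArg DFunLike.coe this) B
  obtain ⟨p, hp⟩ := X_dvd_sub_ev 1 A
  obtain ⟨q, hq⟩ := X_dvd_sub_ev 0 B
  have hAdec : A = Polynomial.aeval (X 0 : MvPolynomial (Fin 2) ℝ) f + X 1 * p := by
    rw [hf]; linear_combination hp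
  have hBdec : B = Polynomial.aeval (X 1 : MvPolynomial (Fin 2) ℝ) g + X 0 * q := by
    rw [hg]; linear_combination hq
  refine ⟨((f, g), (p, q)), ⟨?_, ?_, ?_⟩, ?_⟩
  · rw [hA, hAdec]; ring
  · rw [hB, hBdec]; ring
  · rw [hc, hAdec, hBdec]; ring
  · rintro ⟨⟨f', g'⟩, p', q'⟩ ⟨ha', hb', hc'⟩
    simp only at ha' hb' hc'
    -- determine f', p'
    have hE1 : Polynomial.aeval (X 0 : MvPolynomial (Fin 2) ℝ) f' + X 1 * p'
        = Polynomial.aeval (X 0 : MvPolynomial (Fin 2) ℝ) f + X 1 * p := by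
      apply mul_left_cancel₀ hX0
      have h2 : X 0 * Polynomial.aeval (X 0 : MvPolynomial (Fin 2) ℝ) f
            + X 0 * X 1 * p = a := by rw [hA, hAdec]; ring
      linear_combination -ha' - h2
    have hf' : Polynomial.aeval (X 0 : MvPolynomial (Fin 2) ℝ) f'
        = Polynomial.aeval (X 0 : MvPolynomial (Fin 2) ℝ) f := by
      have h := congrArg (ev 1) hE1
      simpa only [map_add, map_mul, ev_X_self, zero_mul, add_zero,
        ev_aeval 1 0 h01] using h
    have hff : f' = f := aevalX_inj 0 hf'
    have hpp : p' = p := by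
      apply mul_left_cancel₀ hX1
      linear_combination hE1 - hf'
    have hE2 : Polynomial.aeval (X 1 : MvPolynomial (Fin 2) ℝ) g' + X 0 * q'
        = Polynomial.aeval (X 1 : MvPolynomial (Fin 2) ℝ) g + X 0 * q := by
      apply mul_left_cancel₀ hX1
      have h2 : X 1 * Polynomial.aeval (X 1 : MvPolynomial (Fin 2) ℝ) g
            + X 0 * X 1 * q = b := by rw [hB, hBdec]; ring
      linear_combination -hb' - h2
    have hg' : Polynomial.aeval (X 1 : MvPolynomial (Fin 2) ℝ) g'
        = Polynomial.aeval (X 1 : MvPolynomial (Fin 2) ℝ) g := by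
      have h := congrArg (ev 0) hE2
      simpa only [map_add, map_mul, ev_X_self, zero_mul, add_zero,
        ev_aeval 0 1 h10] using h
    have hgg : g' = g := aevalX_inj 1 hg'
    have hqq : q' = q := by
      apply mul_left_cancel₀ hX0
      linear_combination hE2 - hg'
    simp [hff, hgg, hpp, hqq, Prod.ext_iff]
end
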